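/- Let C be a finitely generated free graded module over the ring of long power series ℛ with a grading-decreasing differential, and suppose H(C)/Tors(H(C)) is a free ℛ-module of rank r ≥ 1. Then the maximum of gr over homogeneous non-torsion classes of H(C) exists (i.e., the supremum is attained). -/

import Mathlib

open scoped NNReal

abbrev F2 := ZMod 2

/-- The ring of long power series `ℛ` over `𝔽₂`, realized as Hahn series over `ℝ_{≥0}`,
graded by `gr(v^α) = -α`. -/
abbrev LongR := HahnSeries ℝ≥0 F2

/-- A finitely generated free graded module over `ℛ` with a differential, presented by a
basis `Fin n` with real gradings `gr`. -/
structure RComplex where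
  n : ℕ
  gr : Fin n → ℝ
  d : (Fin n → LongR) →ₗ[LongR] (Fin n → LongR)

namespace RComplex

variable (G : RComplex)

/-- Homogeneous of degree `a`: the element `v^α x` has degree `gr x - α`. -/
def RHomog (a : ℝ) (f : Fin G.n → LongR) : Prop :=
  ∀ x α, (f x).coeff α ≠ 0 → G.gr x - (α : ℝ) = a

/-- The differential is grading-decreasing (it lowers degree by 1). -/
def GrDecreasing : Prop :=
  ∀ a f, G.RHomog a f → G.RHomog (a - 1) (G.d f)

noncomputable abbrev RCycles : Submodule LongR (Fin G.n → LongR) :=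
  LinearMap.ker G.d

/-- The homology of `G`, as an `ℛ`-module. -/
noncomputable abbrev RHomology :=
  G.RCycles ⧸ (LinearMap.range G.d).comap G.RCycles.subtype

/-- The set of gradings of homogeneous, non-torsion classes in the homology of `G`. -/
noncomputable def RUpsSet : Set ℝ :=
  {a | ∃ (f : Fin G.n → LongR) (hf : f ∈ G.RCycles),
    G.RHomog a f ∧
      ∀ r : LongR, r ≠ 0 →
        r • (Submodule.Quotient.mk ⟨f, hf⟩ : G.RHomology) ≠ 0}

end RComplex

/-! ### auxiliary -/

/-- Smart constructor for `ℝ≥0` keeping the type head. -/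
def nn (r : ℝ) (h : 0 ≤ r) : ℝ≥0 := ⟨r, h⟩

@[simp] lemma nn_coe (r : ℝ) (h : 0 ≤ r) : ((nn r h : ℝ≥0) : ℝ) = r := rfl

lemma nn_eq_iff (r : ℝ) (h : 0 ≤ r) (q : ℝ≥0) : nn r h = q ↔ r = (q:ℝ) := by
  rw [← NNReal.coe_inj, nn_coe]

namespace RComplex

variable (G : RComplex)

noncomputable def δ (x : Fin G.n) : Fin G.n → LongR := Pi.single x 1

lemma homog_delta (x : Fin G.n) : G.RHomog (G.gr x) (G.δ x) := by
  intro z α h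
  rcases eq_or_ne z x with rfl | hzx
  · simp only [δ, Pi.single_eq_same, HahnSeries.coeff_one] at h
    split_ifs at h with h0
    · rw [h0]; simp
    · exact absurd rfl h
  · simp [δ, Pi.single_eq_of_ne hzx] at h

noncomputable def cmat (y x : Fin G.n) : F2 :=
  if h : (0:ℝ) ≤ G.gr y - G.gr x + 1 then
    (G.d (G.δ x) y).coeff (nn (G.gr y - G.gr x + 1) h) else 0

lemma d_delta_coeff (hd : G.GrDecreasing) (x y : Fin G.n) (p : ℝ≥0) :
    (G.d (G.δ x) y).coeff p = if (p:ℝ) = G.gr y - G.gr x + 1 then G.cmat y x else 0 := by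
  have hh := hd _ _ (G.homog_delta x)
  split_ifs with h
  · rw [cmat, dif_pos (h ▸ p.2)]
    congr 1
    rw [← NNReal.coe_inj, nn_coe, h]
  · by_contra hne
    have := hh y p hne
    apply h; linarith

lemma d_delta_eq (hd : G.GrDecreasing) (x y : Fin G.n) (h : (0:ℝ) ≤ G.gr y - G.gr x + 1) :
    G.d (G.δ x) y = HahnSeries.single (nn (G.gr y - G.gr x + 1) h) (G.cmat y x) := by
  ext p
  rw [d_delta_coeff G hd, HahnSeries.coeff_single]
  congr 1
  rw [← NNReal.coe_inj, nn_coe]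

lemma d_delta_eq_zero (hd : G.GrDecreasing) (x y : Fin G.n) (h : G.gr y - G.gr x + 1 < 0) :
    G.d (G.δ x) y = 0 := by
  ext p
  rw [d_delta_coeff G hd, if_neg (by nlinarith [p.coe_nonneg]), HahnSeries.coeff_zero]

lemma cmat_eq_zero (hd : G.GrDecreasing) (x y : Fin G.n) (h : G.gr y - G.gr x + 1 < 0) :
    G.cmat y x = 0 := by
  rw [cmat, dif_neg (not_le.mpr h)]

lemma d_expand (f : Fin G.n → LongR) : G.d f = ∑ x, (f x) • G.d (G.δ x) := by
  conv_lhs => rw [← Finset.univ_sum_single f]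
  rw [map_sum]
  congr 1; ext x
  rw [show (Pi.single x (f x) : Fin G.n → LongR) = f x • (G.δ x) by
    ext y; by_cases h : y = x <;> simp [δ, h, Pi.single_apply], map_smul]

lemma coeff_mul_single (g : LongR) (pt : ℝ≥0) (c : F2) (q : ℝ≥0) :
    (g * HahnSeries.single pt c).coeff q =
      if h : pt ≤ q then g.coeff (q - pt) * c else 0 := by
  split_ifs with h
  · conv_lhs => rw [show q = (q - pt) + pt from (tsub_add_cancel_of_le h).symm]
    exact HahnSeries.coeff_mul_single_add
  · by_contra hne
    have hq : q ∈ (g * HahnSeries.single pt c).support := hne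
    have := HahnSeries.support_mul_subset hq
    rw [Set.mem_add] at this
    obtain ⟨u, hu, v, hv, huv⟩ := this
    have hv' : v = pt := by
      by_contra hvp
      exact hv (by rw [HahnSeries.coeff_single, if_neg hvp])
    apply h
    rw [← huv, hv']
    exact le_add_self

/-- The key coefficient formula for the differential. -/
lemma d_apply_coeff (hd : G.GrDecreasing) (f : Fin G.n → LongR) (y : Fin G.n) (q : ℝ≥0) :
    ((G.d f) y).coeff q =
      ∑ x, (if h : (0:ℝ) ≤ (q:ℝ) - (G.gr y - G.gr x + 1) then
        (f x).coeff (nn ((q:ℝ) - (G.gr y - G.gr x + 1)) h) * G.cmat y x else 0) := by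
  rw [d_expand]
  rw [show ((∑ x, (f x) • G.d (G.δ x)) y) = ∑ x, f x * (G.d (G.δ x) y) by
    simp [Finset.sum_apply]]
  rw [show ((∑ x, f x * (G.d (G.δ x) y)).coeff q) = ∑ x, (f x * (G.d (G.δ x) y)).coeff q from
    map_sum (HahnSeries.coeff.addMonoidHom q) _ _]
  congr 1; ext x
  rcases le_or_gt (0:ℝ) (G.gr y - G.gr x + 1) with h | h
  · rw [d_delta_eq G hd x y h, coeff_mul_single]
    have hc : ((nn (G.gr y - G.gr x + 1) h) ≤ q) ↔ (0:ℝ) ≤ (q:ℝ) - (G.gr y - G.gr x + 1) := by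
      rw [← NNReal.coe_le_coe, nn_coe]; constructor <;> intro <;> linarith
    split_ifs with h1 h2 h2
    · congr 2
      rw [← NNReal.coe_inj, NNReal.coe_sub h1, nn_coe, nn_coe]
    · exact absurd (hc.mp h1) h2
    · exact absurd (hc.mpr h2) h1
    · rfl
  · rw [d_delta_eq_zero G hd x y h, mul_zero, HahnSeries.coeff_zero]
    rw [dif_pos (by nlinarith [q.coe_nonneg])]
    rw [cmat_eq_zero G hd x y h, mul_zero]

/-- The `𝔽₂`-matrix of the differential, acting on slices. -/
noncomputable def chat (z : Fin G.n → F2) : Fin G.n → F2 := fun y => ∑ x, G.cmat y x * z x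

@[simp] lemma chat_zero : G.chat 0 = 0 := by
  funext y; simp [chat]

lemma smul_mk_eq_zero_iff (f : Fin G.n → LongR) (hf : f ∈ G.RCycles) (r : LongR) :
    r • (Submodule.Quotient.mk ⟨f, hf⟩ : G.RHomology) = 0 ↔ ∃ v, G.d v = r • f := by
  rw [← Submodule.Quotient.mk_smul, Submodule.Quotient.mk_eq_zero, Submodule.mem_comap]
  have : (G.RCycles.subtype (r • ⟨f, hf⟩)) = r • f := rfl
  rw [this, LinearMap.mem_range]

lemma F2_ne_zero {c : F2} (h : c ≠ 0) : c = 1 := by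
  revert h; revert c; decide

/-- Part I: a nonzero mod-2 homology class gives an element of `RUpsSet`. -/
lemma mem_upsSet_of (hd : G.GrDecreasing) (z : Fin G.n → F2) (hz : G.chat z = 0)
    (hz2 : ¬∃ u, G.chat u = z) : ∃ a : ℝ, a ∈ G.RUpsSet := by
  -- z ≠ 0, so Fin G.n is nonempty
  have hzne : z ≠ 0 := by
    rintro rfl
    exact hz2 ⟨0, G.chat_zero⟩
  obtain ⟨x₀, hx₀⟩ : ∃ x, z x ≠ 0 := by
    by_contra hc
    push_neg at hc
    exact hzne (funext fun x => hc x)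
  have hne : Nonempty (Fin G.n) := ⟨x₀⟩
  set μ : ℝ := Finset.univ.inf' (Finset.univ_nonempty) G.gr with hμ
  have hμle : ∀ x, μ ≤ G.gr x := fun x => Finset.inf'_le _ (Finset.mem_univ x)
  set a : ℝ := μ - 1 with ha
  have hpos : ∀ x : Fin G.n, (0:ℝ) ≤ G.gr x - a := fun x => by
    have := hμle x; simp only [ha]; linarith
  set f₀ : Fin G.n → LongR := fun x => HahnSeries.single (nn (G.gr x - a) (hpos x)) (z x)
    with hf₀
  have hhom : G.RHomog a f₀ := by
    intro x α hα
    simp only [hf₀, HahnSeries.coeff_single] at hα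
    split_ifs at hα with hc
    · rw [hc, nn_coe]; ring
    · exact absurd rfl hα
  have hcyc : f₀ ∈ G.RCycles := by
    rw [LinearMap.mem_ker]
    funext y
    ext q
    rw [d_apply_coeff G hd]
    simp only [Pi.zero_apply, HahnSeries.coeff_zero]
    rcases eq_or_ne (q:ℝ) (G.gr y - a + 1) with hq | hq
    · have : ∀ x, (if h : (0:ℝ) ≤ (q:ℝ) - (G.gr y - G.gr x + 1) then
          (f₀ x).coeff (nn ((q:ℝ) - (G.gr y - G.gr x + 1)) h) * G.cmat y x else 0)
          = G.cmat y x * z x := by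
        intro x
        rw [dif_pos (by rw [hq]; have := hpos x; linarith)]
        rw [mul_comm]
        congr 1
        simp only [hf₀, HahnSeries.coeff_single]
        rw [if_pos]
        rw [← NNReal.coe_inj, nn_coe, nn_coe, hq]
        ring
      rw [Finset.sum_congr rfl (fun x _ => this x)]
      have := congrFun hz y
      simpa [chat] using this
    · apply Finset.sum_eq_zero
      intro x _
      split_ifs with h1
      · simp only [hf₀, HahnSeries.coeff_single]
        rw [if_neg, zero_mul]
        intro hc
        rw [← NNReal.coe_inj, nn_coe, nn_coe] at hc
        exact hq (by linarith)
      · rfl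
  refine ⟨a, f₀, hcyc, hhom, ?_⟩
  intro r hr0 hcon
  rw [smul_mk_eq_zero_iff] at hcon
  obtain ⟨v, hv⟩ := hcon
  set t : ℝ≥0 := r.order with ht
  have hru : r.coeff t = 1 := F2_ne_zero (mt HahnSeries.coeff_order_eq_zero.mp hr0)
  apply hz2
  refine ⟨fun x => (v x).coeff (nn ((t:ℝ) + G.gr x - μ)
    (by have := hμle x; have := t.coe_nonneg; linarith)), ?_⟩
  funext y
  -- evaluate coefficients of `d v = r • f₀` at `t + gr y - a`
  have hqy : (0:ℝ) ≤ (t:ℝ) + G.gr y - a := by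
    have := hμle y; have := t.coe_nonneg; simp only [ha]; linarith
  set q : ℝ≥0 := nn ((t:ℝ) + G.gr y - a) hqy with hq
  have hL := congrArg (fun w => (w y).coeff q) hv
  rw [d_apply_coeff G hd] at hL
  have hterm : ∀ x, (if h : (0:ℝ) ≤ (q:ℝ) - (G.gr y - G.gr x + 1) then
      (v x).coeff (nn ((q:ℝ) - (G.gr y - G.gr x + 1)) h) * G.cmat y x else 0)
      = G.cmat y x * (v x).coeff (nn ((t:ℝ) + G.gr x - μ)
        (by have := hμle x; have := t.coe_nonneg; linarith)) := by
    intro x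
    rw [dif_pos (by
      rw [hq, nn_coe]
      have := hμle x; have := t.coe_nonneg; simp only [ha]; linarith)]
    rw [mul_comm]
    congr 2
    rw [← NNReal.coe_inj]
    simp only [hq, nn_coe, ha]
    ring
  rw [Finset.sum_congr rfl (fun x _ => hterm x)] at hL
  -- right-hand side
  have hR : ((r • f₀) y).coeff q = z y := by
    have : (r • f₀) y = r * f₀ y := rfl
    rw [this, hf₀]
    have hqsplit : q = t + nn (G.gr y - a) (hpos y) := by
      rw [← NNReal.coe_inj]
      simp only [hq, nn_coe, NNReal.coe_add]
      ring
    rw [hqsplit, HahnSeries.coeff_mul_single_add, hru, one_mul]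
  rw [hR] at hL
  unfold chat
  exact hL

end RComplex

/-- PWO helper: a set whose elements are, after coercion to `ℝ`, translates of elements
of finitely many PWO sets, is PWO. -/
lemma isPWO_of_shift {k : ℕ} (s : Set ℝ≥0) (w : Fin k → Set ℝ≥0) (hw : ∀ i, (w i).IsPWO)
    (cst : Fin k → ℝ) (h : ∀ γ ∈ s, ∃ i, ∃ β ∈ w i, (γ:ℝ) = (β:ℝ) + cst i) : s.IsPWO := by
  have hT : ∀ i : Fin k, Set.IsPWO {γ : ℝ≥0 | ∃ β ∈ w i, (γ:ℝ) = (β:ℝ) + cst i} := by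
    intro i
    rw [Set.IsPWO, Set.partiallyWellOrderedOn_iff_exists_lt]
    intro seq hseq
    have hch : ∀ j : ℕ, ∃ β ∈ w i, ((seq j : ℝ≥0) : ℝ) = (β:ℝ) + cst i := fun j => hseq j
    choose β hβw hβe using hch
    obtain ⟨m, nn', hmn, hle⟩ := (hw i).exists_lt hβw
    exact ⟨m, nn', hmn, by
      show seq m ≤ seq nn'
      rw [← NNReal.coe_le_coe, hβe, hβe]
      have : (β m : ℝ) ≤ β nn' := NNReal.coe_le_coe.mpr hle
      linarith⟩
  have hsub : s ⊆ (Finset.univ : Finset (Fin k)).sup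
      (fun i => {γ : ℝ≥0 | ∃ β ∈ w i, (γ:ℝ) = (β:ℝ) + cst i}) := by
    intro γ hγ
    obtain ⟨i, hi⟩ := h γ hγ
    have : γ ∈ {γ : ℝ≥0 | ∃ β ∈ w i, (γ:ℝ) = (β:ℝ) + cst i} := hi
    exact Finset.le_sup (f := fun i => {γ : ℝ≥0 | ∃ β ∈ w i, (γ:ℝ) = (β:ℝ) + cst i})
      (Finset.mem_univ i) this
  refine Set.IsPWO.mono ?_ hsub
  exact (Finset.partiallyWellOrderedOn_sup Finset.univ).mpr (fun i _ => hT i)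

variable (G : RComplex) in
/-- Part II: if mod-2 homology is "exact", every homology class is torsion. -/
lemma RComplex.all_torsion (hd : G.GrDecreasing)
    (hk : ∀ z : Fin G.n → F2, G.chat z = 0 → ∃ u, G.chat u = z) :
    ∀ h : G.RHomology, h ∈ Submodule.torsion LongR G.RHomology := by
  intro h
  obtain ⟨⟨f, hf⟩, rfl⟩ := Submodule.Quotient.mk_surjective _ h
  cases isEmpty_or_nonempty (Fin G.n) with
  | inl hem =>
    have hf0 : f = 0 := funext fun x => hem.elim x
    refine ⟨⟨1, mem_nonZeroDivisors_of_ne_zero one_ne_zero⟩, ?_⟩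
    rw [Submonoid.smul_def, smul_mk_eq_zero_iff]
    exact ⟨0, by rw [hf0, smul_zero, map_zero]⟩
  | inr hne =>
    set μ : ℝ := Finset.univ.inf' (Finset.univ_nonempty) G.gr with hμ
    set M : ℝ := Finset.univ.sup' (Finset.univ_nonempty) G.gr with hM
    have hμle : ∀ x, μ ≤ G.gr x := fun x => Finset.inf'_le _ (Finset.mem_univ x)
    have hMle : ∀ x, G.gr x ≤ M := fun x => Finset.le_sup' _ (Finset.mem_univ x)
    set t : ℝ≥0 := Real.toNNReal (M - μ + 1) with htdef
    have htge : M - μ + 1 ≤ (t:ℝ) := Real.le_coe_toNNReal _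
    set g : Fin G.n → LongR := (HahnSeries.single t 1 : LongR) • f with hgdef
    have hgx : ∀ x, g x = (HahnSeries.single t 1 : LongR) * f x := fun x => rfl
    have hgcyc : G.d g = 0 := by
      rw [hgdef, map_smul]
      rw [LinearMap.mem_ker] at hf
      rw [hf, smul_zero]
    set za : ℝ → Fin G.n → F2 := fun a x =>
      if h : (0:ℝ) ≤ G.gr x - a then (g x).coeff (nn (G.gr x - a) h) else 0 with hza
    have hzacyc : ∀ a, G.chat (za a) = 0 := by
      intro a
      funext y
      simp only [Pi.zero_apply]
      rcases le_or_gt 0 (G.gr y - a + 1) with h1 | h1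
      · have h0 := congrArg (fun w => (w y).coeff (nn (G.gr y - a + 1) h1)) hgcyc
        simp only [Pi.zero_apply, HahnSeries.coeff_zero] at h0
        rw [d_apply_coeff G hd] at h0
        rw [← h0]
        unfold chat
        apply Finset.sum_congr rfl
        intro x _
        rcases le_or_gt 0 (G.gr x - a) with h2 | h2
        · rw [dif_pos (by rw [nn_coe]; linarith)]
          rw [mul_comm, hza]
          simp only
          rw [dif_pos h2]
          congr 2
          rw [← NNReal.coe_inj, nn_coe, nn_coe, nn_coe]
          ring
        · rw [dif_neg (by rw [nn_coe]; intro hcon; linarith)]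
          rw [hza]
          simp only
          rw [dif_neg (not_le.mpr h2), mul_zero]
      · unfold chat
        apply Finset.sum_eq_zero
        intro x _
        rcases le_or_gt 0 (G.gr y - G.gr x + 1) with h2 | h2
        · have h3 : G.gr x - a < 0 := by linarith
          rw [hza]
          simp only
          rw [dif_neg (not_le.mpr h3), mul_zero]
        · rw [cmat_eq_zero G hd x y h2, zero_mul]
    have hzalow : ∀ a, za a ≠ 0 → a ≤ μ - 1 := by
      intro a hane
      obtain ⟨x, hx⟩ : ∃ x, za a x ≠ 0 := by
        by_contra hc; push_neg at hc; exact hane (funext hc)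
      rw [hza] at hx
      simp only at hx
      by_cases h2 : (0:ℝ) ≤ G.gr x - a
      · rw [dif_pos h2] at hx
        have hmem : (nn (G.gr x - a) h2) ∈ (g x).support := hx
        rw [hgx] at hmem
        have := HahnSeries.support_mul_subset hmem
        rw [Set.mem_add] at this
        obtain ⟨u, hu, w, hw, huw⟩ := this
        have hu' : u = t := by
          by_contra hut
          exact hu (by rw [HahnSeries.coeff_single, if_neg hut])
        have h5 : (t:ℝ) ≤ G.gr x - a := by
          have h6 := congrArg (fun ξ : ℝ≥0 => (ξ:ℝ)) huw
          simp only [NNReal.coe_add, hu', nn_coe] at h6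
          have := w.coe_nonneg
          linarith
        have := hMle x
        linarith
      · rw [dif_neg h2] at hx
        exact absurd rfl hx
    set U : ℝ → Fin G.n → F2 := fun a =>
      if h : za a = 0 then 0 else Classical.choose (hk (za a) (hzacyc a)) with hU
    have hUspec : ∀ a, G.chat (U a) = za a := by
      intro a
      rw [hU]
      simp only
      split_ifs with h0
      · rw [chat_zero, h0]
      · exact Classical.choose_spec (hk (za a) (hzacyc a))
    have hUzero : ∀ a, za a = 0 → U a = 0 := by
      intro a h0
      rw [hU]; simp only; rw [dif_pos h0]
    have hpwo : ∀ x : Fin G.n,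
        (Function.support fun γ : ℝ≥0 => U (G.gr x - (γ:ℝ) - 1) x).IsPWO := by
      intro x
      apply isPWO_of_shift _ (fun x' => (f x').support)
        (fun x' => HahnSeries.isPWO_support _) (fun x' => (t:ℝ) + G.gr x - G.gr x' - 1)
      intro γ hγ
      have hz : za (G.gr x - (γ:ℝ) - 1) ≠ 0 := by
        intro h0
        have hz0 : U (G.gr x - (γ:ℝ) - 1) x = 0 := by rw [hUzero _ h0]; rfl
        exact hγ hz0
      obtain ⟨x', hx'⟩ : ∃ x', za (G.gr x - (γ:ℝ) - 1) x' ≠ 0 := by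
        by_contra hc; push_neg at hc; exact hz (funext hc)
      rw [hza] at hx'
      simp only at hx'
      by_cases h2 : (0:ℝ) ≤ G.gr x' - (G.gr x - (γ:ℝ) - 1)
      · rw [dif_pos h2] at hx'
        have hmem : (nn _ h2) ∈ (g x').support := hx'
        rw [hgx] at hmem
        have := HahnSeries.support_mul_subset hmem
        rw [Set.mem_add] at this
        obtain ⟨u, hu, w, hw, huw⟩ := this
        have hu' : u = t := by
          by_contra hut
          exact hu (by rw [HahnSeries.coeff_single, if_neg hut])
        refine ⟨x', w, hw, ?_⟩
        have h6 := congrArg (fun ξ : ℝ≥0 => (ξ:ℝ)) huw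
        simp only [NNReal.coe_add, hu', nn_coe] at h6
        linarith
      · rw [dif_neg h2] at hx'
        exact absurd rfl hx'
    set v : Fin G.n → LongR := fun x =>
      ⟨fun γ => U (G.gr x - (γ:ℝ) - 1) x, hpwo x⟩ with hv
    have hvcoeff : ∀ x (γ : ℝ≥0), (v x).coeff γ = U (G.gr x - (γ:ℝ) - 1) x := fun x γ => rfl
    have hdv : G.d v = g := by
      funext y
      ext q
      rw [d_apply_coeff G hd]
      have hgy : (g y).coeff q = za (G.gr y - (q:ℝ)) y := by
        rw [hza]
        simp only
        rw [dif_pos (by rw [sub_sub_cancel]; exact q.coe_nonneg)]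
        congr 1
        rw [← NNReal.coe_inj, nn_coe]
        rw [sub_sub_cancel]
      rw [hgy, ← hUspec (G.gr y - (q:ℝ))]
      unfold chat
      apply Finset.sum_congr rfl
      intro x _
      rcases le_or_gt 0 ((q:ℝ) - (G.gr y - G.gr x + 1)) with h2 | h2
      · rw [dif_pos h2, mul_comm]
        congr 1
        rw [hvcoeff, nn_coe]
        have harg : G.gr x - ((q:ℝ) - (G.gr y - G.gr x + 1)) - 1 = G.gr y - (q:ℝ) := by ring
        rw [harg]
      · rw [dif_neg (not_le.mpr h2)]
        by_cases h3 : za (G.gr y - (q:ℝ)) = 0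
        · rw [hUzero _ h3]
          simp
        · have := hzalow _ h3
          have h4 : G.gr y - G.gr x + 1 < 0 := by
            have := hμle x
            have := q.coe_nonneg
            linarith
          rw [cmat_eq_zero G hd x y h4, zero_mul]
    refine ⟨⟨HahnSeries.single t 1,
      mem_nonZeroDivisors_of_ne_zero (HahnSeries.single_ne_zero one_ne_zero)⟩, ?_⟩
    rw [Submonoid.smul_def, smul_mk_eq_zero_iff]
    exact ⟨v, by rw [hdv, hgdef]⟩



variable (G : RComplex) in
/-- Part III: every element of `RUpsSet` is dominated by an element of `RUpsSet` of the
form `min_{x ∈ S} gr x`. -/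
lemma RComplex.upsSet_promote (a : ℝ) (ha : a ∈ G.RUpsSet) :
    ∃ b, b ∈ G.RUpsSet ∧ a ≤ b ∧
      ∃ (S : Finset (Fin G.n)) (hS : S.Nonempty), b = S.inf' hS G.gr := by
  classical
  obtain ⟨f, hf, hhom, hnt⟩ := ha
  have hfne : f ≠ 0 := by
    rintro rfl
    apply hnt 1 one_ne_zero
    rw [G.smul_mk_eq_zero_iff]
    exact ⟨0, by rw [map_zero, smul_zero]⟩
  set S : Finset (Fin G.n) := Finset.univ.filter (fun x => f x ≠ 0) with hSdef
  have hSmem : ∀ x, x ∈ S ↔ f x ≠ 0 := by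
    intro x; simp [hSdef]
  have hS : S.Nonempty := by
    obtain ⟨x, hx⟩ : ∃ x, f x ≠ 0 := by
      by_contra hc; push_neg at hc; exact hfne (funext hc)
    exact ⟨x, (hSmem x).mpr hx⟩
  have hexc : ∀ x ∈ S, ∃ α, (f x).coeff α ≠ 0 := by
    intro x hx
    by_contra hc; push_neg at hc
    exact (hSmem x).mp hx (HahnSeries.ext (funext hc))
  have hale : ∀ x ∈ S, a ≤ G.gr x := by
    intro x hx
    obtain ⟨α, hα⟩ := hexc x hx
    have := hhom x α hα
    have := α.coe_nonneg
    linarith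
  set m : ℝ := S.inf' hS G.gr with hm
  have ham : a ≤ m := Finset.le_inf' hS _ hale
  have hmle : ∀ x ∈ S, m ≤ G.gr x := fun x hx => Finset.inf'_le _ hx
  have hxa : ∀ x ∈ S, (0:ℝ) ≤ G.gr x - a := fun x hx => by have := hale x hx; linarith
  have hflead : ∀ x (hx : x ∈ S), f x = HahnSeries.single (nn (G.gr x - a) (hxa x hx)) 1 := by
    intro x hx
    have hsupp : ∀ α, (f x).coeff α ≠ 0 → α = nn (G.gr x - a) (hxa x hx) := by
      intro α hα
      have := hhom x α hα
      rw [← NNReal.coe_inj, nn_coe]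
      linarith
    have hco : (f x).coeff (nn (G.gr x - a) (hxa x hx)) ≠ 0 := by
      obtain ⟨α, hα⟩ := hexc x hx
      rwa [hsupp α hα] at hα
    ext β
    rw [HahnSeries.coeff_single]
    split_ifs with hβ
    · rw [hβ]; exact F2_ne_zero hco
    · by_contra hβ2
      exact hβ (hsupp β hβ2)
  have hxm : ∀ x (hx : x ∈ S), (0:ℝ) ≤ G.gr x - m := fun x hx => by
    have := hmle x hx; linarith
  set g : Fin G.n → LongR := fun x =>
    if hx : x ∈ S then HahnSeries.single (nn (G.gr x - m) (hxm x hx)) 1 else 0 with hg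
  have hma : (0:ℝ) ≤ m - a := by linarith
  set s : LongR := HahnSeries.single (nn (m - a) hma) 1 with hs
  have hsne : s ≠ 0 := HahnSeries.single_ne_zero one_ne_zero
  have hfs : f = s • g := by
    funext x
    have : (s • g) x = s * g x := rfl
    rw [this, hg]
    simp only
    split_ifs with hx
    · have hpt : nn (m - a) hma + nn (G.gr x - m) (hxm x hx) = nn (G.gr x - a) (hxa x hx) := by
        rw [← NNReal.coe_inj, NNReal.coe_add, nn_coe, nn_coe, nn_coe]
        ring
      rw [hflead x hx, hs, HahnSeries.single_mul_single, one_mul, hpt]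
    · rw [mul_zero]
      by_contra hc
      exact hx ((hSmem x).mpr hc)
  have hgcyc : g ∈ G.RCycles := by
    rw [LinearMap.mem_ker] at hf ⊢
    have hds : s • G.d g = 0 := by rw [← map_smul, ← hfs, hf]
    funext y
    have : s * (G.d g) y = 0 := congrFun hds y
    rcases mul_eq_zero.mp this with h | h
    · exact absurd h hsne
    · rw [h]; rfl
  have hghom : G.RHomog m g := by
    intro x α hα
    rw [hg] at hα
    simp only at hα
    split_ifs at hα with hx
    · rw [HahnSeries.coeff_single] at hα
      split_ifs at hα with hβ
      · rw [hβ, nn_coe]; ring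
      · exact absurd rfl hα
    · simp at hα
  refine ⟨m, ⟨g, hgcyc, hghom, ?_⟩, ham, S, hS, hm⟩
  intro r hr hcon
  rw [smul_mk_eq_zero_iff] at hcon
  obtain ⟨v, hv⟩ := hcon
  apply hnt r hr
  rw [smul_mk_eq_zero_iff]
  refine ⟨s • v, ?_⟩
  rw [map_smul, hv, hfs, smul_smul, smul_smul, mul_comm]


/-- Let `C` be a finitely generated free graded module over `ℛ` with a grading-decreasing
differential, such that `H(C)/Tors(H(C))` is a free `ℛ`-module of rank `r ≥ 1`.  Then the
maximum of the grading over homogeneous non-torsion classes of `H(C)` exists (the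
supremum is attained). -/
theorem upsSet_isGreatest (G : RComplex) (hd : G.GrDecreasing) (r : ℕ) (hr : 1 ≤ r)
    (hfree : Nonempty
      ((G.RHomology ⧸ Submodule.torsion LongR G.RHomology) ≃ₗ[LongR] (Fin r → LongR))) :
    ∃ u : ℝ, IsGreatest G.RUpsSet u := by
  classical
  obtain ⟨e⟩ := hfree
  -- Step 1: there is a nonzero mod-2 homology class
  have hex : ∃ z : Fin G.n → F2, G.chat z = 0 ∧ ¬∃ u, G.chat u = z := by
    by_contra hc
    push_neg at hc
    have htor := G.all_torsion hd (fun z hz => hc z hz)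
    have htop : Submodule.torsion LongR G.RHomology = ⊤ :=
      eq_top_iff.mpr (fun x _ => htor x)
    have hsub : Subsingleton (G.RHomology ⧸ Submodule.torsion LongR G.RHomology) :=
      Submodule.Quotient.subsingleton_iff.mpr htop
    have hsub2 : Subsingleton (Fin r → LongR) := e.symm.toEquiv.subsingleton
    have h10 : (fun _ : Fin r => (1 : LongR)) = (fun _ => 0) := Subsingleton.elim _ _
    exact one_ne_zero (congrFun h10 ⟨0, hr⟩)
  obtain ⟨z, hz1, hz2⟩ := hex
  obtain ⟨a₀, ha₀⟩ := G.mem_upsSet_of hd z hz1 hz2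
  -- Step 2: finitely many candidate maxima
  set Vf : Finset (Fin G.n) → ℝ :=
    fun S => if hS : S.Nonempty then S.inf' hS G.gr else 0 with hVf
  set W := G.RUpsSet ∩ Set.range Vf with hW
  have hWfin : W.Finite := Set.Finite.inter_of_right (Set.finite_range Vf) _
  have hprom : ∀ a ∈ G.RUpsSet, ∃ b ∈ W, a ≤ b := by
    intro a ha
    obtain ⟨b, hb, hab, S, hS, hbS⟩ := G.upsSet_promote a ha
    refine ⟨b, ⟨hb, ⟨S, ?_⟩⟩, hab⟩
    rw [hVf]
    simp only
    rw [dif_pos hS, hbS]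
  obtain ⟨b₀, hb₀, _⟩ := hprom a₀ ha₀
  have hWne : W.Nonempty := ⟨b₀, hb₀⟩
  obtain ⟨u, huW, humax⟩ := hWfin.exists_maximal hWne
  refine ⟨u, huW.1, ?_⟩
  intro a ha
  obtain ⟨b, hbW, hab⟩ := hprom a ha
  rcases le_total b u with h | h
  · linarith
  · have := humax hbW h
    linarith
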